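/- Let p ≡ 1 (mod 3) be prime, ρ a character of F_p* of order 3, and E the elliptic curve y² + y = x³ over F_p. Then the trace of Frobenius of E satisfies t_p(E) = −p·[(ρ choose ρ²) + (ρ² choose ρ)], where (A choose B) denotes the normalized Jacobi sum B(−1)/p · J(A, B̄). -/

import Mathlib

/-- Greene's normalized Jacobi sum `(A choose B) = B(−1)/p · J(A, B̄)`. -/
noncomputable def jbinom {F : Type*} [Field F] [Fintype F] (A B : MulChar F ℂ) : ℂ :=
  B (-1) / (Fintype.card F : ℂ) * ∑ x : F, A x * B⁻¹ (1 - x)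

open Finset Polynomial

section aux

variable {p : ℕ} [Fact p.Prime]

/-- Substitution `y ↦ (y+1)⁻¹` turns the point-count sum into a Jacobi sum. -/
lemma sum_subst (σ : MulChar (ZMod p) ℂ) (hσ : σ ^ 3 = 1) :
    ∑ y : ZMod p, σ (y ^ 2 + y) = ∑ x : ZMod p, σ x * σ (1 - x) := by
  have key : ∀ y : ZMod p, σ (y ^ 2 + y) = σ ((y + 1)⁻¹) * σ (1 - (y + 1)⁻¹) := by
    intro y
    by_cases h : y + 1 = 0
    · have hy : y ^ 2 + y = 0 := by
        have : y = -1 := by linear_combination h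
        rw [this]; ring
      simp [hy, h, MulChar.map_zero]
    · have h1 : (1 : ZMod p) - (y + 1)⁻¹ = y * (y + 1)⁻¹ := by
        field_simp
        ring
      have h2 : y ^ 2 + y = y * (y + 1) := by ring
      set v := σ ((y + 1)⁻¹) with hv
      have hv1 : v * σ (y + 1) = 1 := by
        rw [hv, ← map_mul, inv_mul_cancel₀ h, MulChar.map_one]
      have hv3 : v ^ 3 = 1 := by
        rw [hv, ← MulChar.pow_apply' σ (by norm_num), hσ,
          MulChar.one_apply (isUnit_iff_ne_zero.mpr (inv_ne_zero h))]
      have hv0 : v ≠ 0 := left_ne_zero_of_mul_eq_one hv1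
      have hv2 : v ^ 2 = σ (y + 1) := by
        have : v ^ 2 * v = σ (y + 1) * v := by
          rw [← pow_succ, hv3, mul_comm (σ (y+1)) v, hv1]
        exact mul_right_cancel₀ hv0 this
      rw [h2, map_mul, h1, map_mul, ← hv, ← hv2]
      ring
  calc ∑ y : ZMod p, σ (y ^ 2 + y)
      = ∑ y : ZMod p, σ ((y + 1)⁻¹) * σ (1 - (y + 1)⁻¹) :=
        Finset.sum_congr rfl fun y _ => key y
    _ = ∑ x : ZMod p, σ x * σ (1 - x) := by
        apply Fintype.sum_bijective (fun y : ZMod p => (y + 1)⁻¹)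
        · exact (inv_involutive.bijective).comp (Equiv.addRight (1 : ZMod p)).bijective
        · intro y; rfl

/-- If `ρ a = 1` for a nonzero `a`, then `a` is a cube. -/
lemma exists_cubeRoot (ρ : MulChar (ZMod p) ℂ) (hρ : orderOf ρ = 3) {a : ZMod p}
    (ha : a ≠ 0) (h : ρ a = 1) : ∃ b : ZMod p, b ^ 3 = a := by
  have hρ3 : ρ ^ 3 = 1 := by rw [← hρ]; exact pow_orderOf_eq_one ρ
  obtain ⟨g, hg⟩ := IsCyclic.exists_generator (α := (ZMod p)ˣ)
  have hu : IsUnit a := isUnit_iff_ne_zero.mpr ha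
  have hua : (hu.unit : ZMod p) = a := hu.unit_spec
  have hmem : ∀ v : (ZMod p)ˣ, ∃ n : ℕ, g ^ n = v := by
    intro v
    have := hg v
    rwa [← mem_powers_iff_mem_zpowers, Submonoid.mem_powers_iff] at this
  obtain ⟨n, hn⟩ := hmem hu.unit
  have hw3 : (ρ ↑g) ^ 3 = 1 := by
    rw [← MulChar.pow_apply' ρ (by norm_num), hρ3, MulChar.one_apply_coe]
  have hw1 : ρ ↑g ≠ 1 := by
    intro hw
    have hone : ρ = 1 := by
      rw [MulChar.eq_one_iff]
      intro v
      obtain ⟨m, hm⟩ := hmem v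
      rw [← hm, Units.val_pow_eq_pow_val, map_pow, hw, one_pow]
    rw [hone, orderOf_one] at hρ
    norm_num at hρ
  have hword : orderOf (ρ ↑g) = 3 := by
    have hdvd := orderOf_dvd_of_pow_eq_one hw3
    rcases (Nat.prime_three).eq_one_or_self_of_dvd _ hdvd with h1 | h3
    · exact absurd (orderOf_eq_one_iff.mp h1) hw1
    · exact h3
  have hpow : (ρ ↑g) ^ n = 1 := by
    rw [← map_pow, ← Units.val_pow_eq_pow_val, hn, hua, h]
  have h3n : 3 ∣ n := hword ▸ orderOf_dvd_of_pow_eq_one hpow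
  obtain ⟨m, rfl⟩ := h3n
  refine ⟨↑(g ^ m), ?_⟩
  rw [← Units.val_pow_eq_pow_val, ← pow_mul, mul_comm m 3, hn, hua]

/-- The number of cube roots of `a` as a character sum. -/
lemma cube_count (hp3 : 3 < p) (h1 : p % 3 = 1) (ρ : MulChar (ZMod p) ℂ)
    (hρ : orderOf ρ = 3) (a : ZMod p) :
    ∑ x : ZMod p, (if x ^ 3 = a then (1 : ℂ) else 0) = 1 + ρ a + (ρ ^ 2) a := by
  classical
  have hρ3 : ρ ^ 3 = 1 := by rw [← hρ]; exact pow_orderOf_eq_one ρ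
  have hsum : ∑ x : ZMod p, (if x ^ 3 = a then (1 : ℂ) else 0)
      = ((univ.filter (fun x : ZMod p => x ^ 3 = a)).card : ℂ) := by
    rw [Finset.card_filter]; push_cast; rfl
  -- a primitive cube root of unity in ZMod p
  have hdvd : 3 ∣ Fintype.card (ZMod p)ˣ := by
    rw [ZMod.card_units_eq_totient, Nat.totient_prime (Fact.out : p.Prime)]
    omega
  have : Fact (Nat.Prime 3) := ⟨Nat.prime_three⟩
  obtain ⟨u, hu⟩ := exists_prime_orderOf_dvd_card 3 hdvd
  have hζord : orderOf ((u : ZMod p)) = 3 := by rw [orderOf_units, hu]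
  have hζ : IsPrimitiveRoot ((u : ZMod p)) 3 := hζord ▸ IsPrimitiveRoot.orderOf _
  rcases eq_or_ne a 0 with rfl | ha
  · have hf : (univ.filter (fun x : ZMod p => x ^ 3 = 0)) = {0} := by
      ext x
      simp [pow_eq_zero_iff (by norm_num : (3:ℕ) ≠ 0)]
    rw [hsum, hf]
    simp [MulChar.map_zero]
  · have hz3 : (ρ a) ^ 3 = 1 := by
      rw [← MulChar.pow_apply' ρ (by norm_num), hρ3,
        MulChar.one_apply (isUnit_iff_ne_zero.mpr ha)]
    have hz2 : (ρ ^ 2) a = (ρ a) ^ 2 := MulChar.pow_apply' ρ (by norm_num) a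
    by_cases hcube : ∃ b : ZMod p, b ^ 3 = a
    · obtain ⟨b, hb⟩ := hcube
      have hb0 : b ≠ 0 := by
        rintro rfl
        rw [zero_pow (by norm_num : (3:ℕ) ≠ 0)] at hb
        exact ha hb.symm
      have hz1 : ρ a = 1 := by
        rw [← hb, map_pow, ← MulChar.pow_apply' ρ (by norm_num), hρ3,
          MulChar.one_apply (isUnit_iff_ne_zero.mpr hb0)]
      have hcard : (univ.filter (fun x : ZMod p => x ^ 3 = a)).card
          = (nthRootsFinset 3 (1 : ZMod p)).card := by
        apply Finset.card_bij' (fun x _ => x * b⁻¹) (fun z _ => z * b)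
        · intro x hx
          simp only [mem_filter, mem_univ, true_and] at hx
          rw [Polynomial.mem_nthRootsFinset (by norm_num)]
          rw [mul_pow, hx, inv_pow, hb, mul_inv_cancel₀ ha]
        · intro z hz
          rw [Polynomial.mem_nthRootsFinset (by norm_num)] at hz
          simp only [mem_filter, mem_univ, true_and]
          rw [mul_pow, hz, one_mul, hb]
        · intro x _; field_simp
        · intro z _; field_simp
      rw [hsum, hcard, hζ.card_nthRootsFinset, hz1, hz2, hz1]
      norm_num
    · have hf : (univ.filter (fun x : ZMod p => x ^ 3 = a)) = ∅ := by
        ext x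
        simp only [mem_filter, mem_univ, true_and, Finset.notMem_empty, iff_false]
        exact fun hx => hcube ⟨x, hx⟩
      have hz1 : ρ a ≠ 1 := fun h => hcube (exists_cubeRoot ρ hρ ha h)
      have : (ρ a - 1) * (1 + ρ a + (ρ a) ^ 2) = 0 := by linear_combination hz3
      rcases mul_eq_zero.mp this with h | h
      · exact absurd (by linear_combination h) hz1
      · rw [hsum, hf, hz2]
        simp only [Finset.card_empty, Nat.cast_zero]
        linear_combination -h
end aux

/-- For `p ≡ 1 (mod 3)` prime and `ρ` a cubic character of `F_p*`, the trace of Frobenius of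
`E : y² + y = x³` is `t_p(E) = −p·[(ρ choose ρ²) + (ρ² choose ρ)]`. -/
theorem trace_frobenius_jacobi (p : ℕ) [Fact p.Prime] (hp3 : 3 < p) (h1 : p % 3 = 1)
    (ρ : MulChar (ZMod p) ℂ) (hρ : orderOf ρ = 3) :
    (((p : ℤ) + 1 -
        (1 + (Nat.card {P : ZMod p × ZMod p // P.2 ^ 2 + P.2 = P.1 ^ 3} : ℤ))) : ℂ) =
      -(p : ℂ) * (jbinom ρ (ρ ^ 2) + jbinom (ρ ^ 2) ρ) := by
  classical
  have hρ3 : ρ ^ 3 = 1 := by rw [← hρ]; exact pow_orderOf_eq_one ρ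
  have hρ23 : (ρ ^ 2) ^ 3 = 1 := by
    rw [← pow_mul, mul_comm, pow_mul, hρ3, one_pow]
  have hinv2 : (ρ ^ 2)⁻¹ = ρ := inv_eq_of_mul_eq_one_right (by rw [← pow_succ]; exact hρ3)
  have hinv1 : ρ⁻¹ = ρ ^ 2 := inv_eq_of_mul_eq_one_right (by rw [← pow_succ']; exact hρ3)
  have hm1 : ρ (-1) = 1 :=
    MulChar.val_neg_one_eq_one_of_odd_order (by decide : Odd 3) hρ3
  have hm2 : (ρ ^ 2) (-1) = 1 :=
    MulChar.val_neg_one_eq_one_of_odd_order (by decide : Odd 3) hρ23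
  have hp0 : (p : ℂ) ≠ 0 := by
    exact_mod_cast Nat.cast_ne_zero.mpr (Nat.Prime.ne_zero Fact.out)
  set J1 : ℂ := ∑ x : ZMod p, ρ x * ρ (1 - x) with hJ1
  set J2 : ℂ := ∑ x : ZMod p, (ρ ^ 2) x * (ρ ^ 2) (1 - x) with hJ2
  -- point count
  have hN : ((Nat.card {P : ZMod p × ZMod p // P.2 ^ 2 + P.2 = P.1 ^ 3}) : ℂ)
      = (p : ℂ) + J1 + J2 := by
    rw [Nat.card_eq_fintype_card, Fintype.card_subtype, Finset.card_filter]
    push_cast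
    rw [Fintype.sum_prod_type]
    have swap : ∑ x : ZMod p, ∑ y : ZMod p, (if y ^ 2 + y = x ^ 3 then (1:ℂ) else 0)
        = ∑ y : ZMod p, ∑ x : ZMod p, (if x ^ 3 = y ^ 2 + y then (1:ℂ) else 0) := by
      rw [Finset.sum_comm]
      exact Finset.sum_congr rfl fun y _ => Finset.sum_congr rfl fun x _ => by
        simp only [eq_comm]
    calc ∑ x : ZMod p, ∑ y : ZMod p, (if y ^ 2 + y = x ^ 3 then (1:ℂ) else 0)
        = ∑ y : ZMod p, ∑ x : ZMod p, (if x ^ 3 = y ^ 2 + y then (1:ℂ) else 0) := swap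
      _ = ∑ y : ZMod p, (1 + ρ (y ^ 2 + y) + (ρ ^ 2) (y ^ 2 + y)) :=
          Finset.sum_congr rfl fun y _ => cube_count hp3 h1 ρ hρ (y ^ 2 + y)
      _ = (p : ℂ) + J1 + J2 := by
          rw [Finset.sum_add_distrib, Finset.sum_add_distrib, Finset.sum_const,
            Finset.card_univ, ZMod.card, sum_subst ρ hρ3, sum_subst (ρ ^ 2) hρ23,
            nsmul_eq_mul, mul_one, hJ1, hJ2]
  -- the Jacobi binomials
  have hj1 : jbinom ρ (ρ ^ 2) = J1 / p := by
    rw [jbinom, hinv2, hm2, ZMod.card, hJ1]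
    ring
  have hj2 : jbinom (ρ ^ 2) ρ = J2 / p := by
    rw [jbinom, hinv1, hm1, ZMod.card, hJ2]
    ring
  push_cast
  rw [hN, hj1, hj2]
  field_simp
  ring
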